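/- The (N-1)×(N-1) symmetric tridiagonal matrix E with entries E_{j,k} = √(j(N-j)) √(k(N-k)) (2δ_{j,k} - δ_{j+1,k} - δ_{j-1,k}) has eigenvalues exactly k(k+1) for k = 1, …, N-1. In particular, E is positive definite. -/

import Mathlib

open Matrix

namespace EMatrixAux
open Finset Polynomial

/-- Falling-factorial-type polynomial basis. -/
noncomputable def phi (i : ℕ) (y : ℝ) : ℝ := ∏ m ∈ Finset.range i, (y - m)

lemma phi_zero (y : ℝ) : phi 0 y = 1 := by simp [phi]

lemma phi_succ (i : ℕ) (y : ℝ) : phi (i + 1) y = phi i y * (y - i) := by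
  simp [phi, Finset.prod_range_succ]

lemma phi_succ' (i : ℕ) (y : ℝ) : phi (i + 1) y = y * phi i (y - 1) := by
  induction i with
  | zero => simp [phi]
  | succ i ih =>
    rw [phi_succ, ih, phi_succ]
    push_cast
    ring

lemma phi_delta (i : ℕ) (y : ℝ) :
    phi (i + 1) (y + 1) - phi (i + 1) y = (i + 1) * phi i y := by
  have h1 : phi (i + 1) (y + 1) = (y + 1) * phi i y := by
    rw [phi_succ']; ring_nf
  rw [h1, phi_succ]
  ring

lemma phi_nabla (i : ℕ) (y : ℝ) :
    phi (i + 1) y - phi (i + 1) (y - 1) = (i + 1) * phi i (y - 1) := by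
  have h1 : phi (i + 1) (y - 1) = phi i (y - 1) * (y - 1 - i) := phi_succ i (y - 1)
  rw [phi_succ', h1]
  ring

/-- The key one-basis-element identity for the Hahn-type difference operator. -/
lemma key_phi (ν : ℝ) (i : ℕ) (y : ℝ) :
    (y + 2) * (ν - 2 - y) * (phi (i + 1) (y + 1) - phi (i + 1) y)
      - y * (ν - y) * (phi (i + 1) y - phi (i + 1) (y - 1))
    = -((i + 1) * (i + 4)) * phi (i + 1) y
      + (i + 1) * (i + 2) * (ν - 2 - i) * phi i y := by
  rw [phi_delta, phi_nabla]
  have h2 : y * phi i (y - 1) = phi (i + 1) y := (phi_succ' i y).symm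
  have h3 : phi (i + 1) y = phi i y * (y - i) := phi_succ i y
  calc (y + 2) * (ν - 2 - y) * ((i + 1) * phi i y)
        - y * (ν - y) * ((i + 1) * phi i (y - 1))
      = (y + 2) * (ν - 2 - y) * ((i + 1) * phi i y)
        - (ν - y) * (i + 1) * (y * phi i (y - 1)) := by ring
    _ = (y + 2) * (ν - 2 - y) * ((i + 1) * phi i y)
        - (ν - y) * (i + 1) * (phi i y * (y - i)) := by rw [h2, h3]
    _ = -((i + 1) * (i + 4)) * (phi i y * (y - i))
        + (i + 1) * (i + 2) * (ν - 2 - i) * phi i y := by ring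
    _ = _ := by rw [← h3]


/-- Coefficients of the Hahn-type eigenpolynomial of degree `d`. -/
noncomputable def c (ν : ℝ) (d i : ℕ) : ℝ :=
  (∏ m ∈ Finset.range i, (((m : ℝ) - d) * ((m : ℝ) + d + 3)))
    * ∏ m ∈ Finset.Ico i d, (((m : ℝ) + 1) * ((m : ℝ) + 2) * (ν - 2 - m))

lemma c_rec (ν : ℝ) (d i : ℕ) (h : i < d) :
    c ν d (i + 1) * (((i : ℝ) + 1) * ((i : ℝ) + 2) * (ν - 2 - i))
      = c ν d i * (((i : ℝ) - d) * ((i : ℝ) + d + 3)) := by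
  unfold c
  rw [Finset.prod_range_succ, Finset.prod_eq_prod_Ico_succ_bot h]
  ring

lemma c_d_ne_zero (ν : ℝ) (d : ℕ) : c ν d d ≠ 0 := by
  unfold c
  rw [Finset.Ico_self, Finset.prod_empty, mul_one]
  apply Finset.prod_ne_zero_iff.mpr
  intro m hm
  rw [Finset.mem_range] at hm
  have h1 : (m : ℝ) < d := by exact_mod_cast hm
  have h2 : (0 : ℝ) < (m : ℝ) + d + 3 := by positivity
  exact mul_ne_zero (by linarith) (by linarith)

/-- The eigenpolynomial (as a function). -/
noncomputable def p (ν : ℝ) (d : ℕ) (y : ℝ) : ℝ :=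
  ∑ i ∈ Finset.range (d + 1), c ν d i * phi i y


lemma p_eigen (ν : ℝ) (d : ℕ) (y : ℝ) :
    (y + 2) * (ν - 2 - y) * (p ν d (y + 1) - p ν d y)
      - y * (ν - y) * (p ν d y - p ν d (y - 1))
    = -((d : ℝ) * (d + 3)) * p ν d y := by
  have expand :
      (y + 2) * (ν - 2 - y) * (p ν d (y + 1) - p ν d y)
        - y * (ν - y) * (p ν d y - p ν d (y - 1))
      = ∑ i ∈ Finset.range (d + 1), c ν d i *
          ((y + 2) * (ν - 2 - y) * (phi i (y + 1) - phi i y)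
            - y * (ν - y) * (phi i y - phi i (y - 1))) := by
    simp only [p, ← Finset.sum_sub_distrib, Finset.mul_sum]
    apply Finset.sum_congr rfl
    intros; ring
  rw [expand, Finset.sum_range_succ']
  have h0 : c ν d 0 *
      ((y + 2) * (ν - 2 - y) * (phi 0 (y + 1) - phi 0 y)
        - y * (ν - y) * (phi 0 y - phi 0 (y - 1))) = 0 := by
    simp [phi]
  rw [h0, add_zero]
  have hterm : ∀ i ∈ Finset.range d,
      c ν d (i + 1) *
        ((y + 2) * (ν - 2 - y) * (phi (i + 1) (y + 1) - phi (i + 1) y)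
          - y * (ν - y) * (phi (i + 1) y - phi (i + 1) (y - 1)))
      = -(((i : ℝ) + 1) * ((i : ℝ) + 1 + 3)) * (c ν d (i + 1) * phi (i + 1) y)
        + c ν d i * (((i : ℝ) - d) * ((i : ℝ) + d + 3)) * phi i y := by
    intro i hi
    rw [key_phi]
    rw [Finset.mem_range] at hi
    have := c_rec ν d i hi
    calc c ν d (i + 1) *
          (-((i + 1 : ℝ) * (i + 4)) * phi (i + 1) y
            + (i + 1) * (i + 2) * (ν - 2 - i) * phi i y)
        = -(((i : ℝ) + 1) * ((i : ℝ) + 1 + 3)) * (c ν d (i + 1) * phi (i + 1) y)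
          + (c ν d (i + 1) * (((i : ℝ) + 1) * ((i : ℝ) + 2) * (ν - 2 - i))) * phi i y := by
          ring
      _ = _ := by rw [this]
  rw [Finset.sum_congr rfl hterm, Finset.sum_add_distrib]
  -- now handle the two sums
  have hF : ∑ i ∈ Finset.range d,
      -(((i : ℝ) + 1) * ((i : ℝ) + 1 + 3)) * (c ν d (i + 1) * phi (i + 1) y)
      = ∑ i ∈ Finset.range (d + 1), -((i : ℝ) * ((i : ℝ) + 3)) * (c ν d i * phi i y) := by
    rw [Finset.sum_range_succ']
    push_cast
    simp
  rw [hF, Finset.sum_range_succ]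
  rw [show p ν d y = (∑ i ∈ Finset.range d, c ν d i * phi i y) + c ν d d * phi d y from by
    rw [p, Finset.sum_range_succ]]
  have hcomb : (∑ x ∈ Finset.range d, -((x : ℝ) * ((x : ℝ) + 3)) * (c ν d x * phi x y))
      + ∑ x ∈ Finset.range d, c ν d x * (((x : ℝ) - d) * ((x : ℝ) + d + 3)) * phi x y
      = -((d : ℝ) * ((d : ℝ) + 3)) * ∑ x ∈ Finset.range d, c ν d x * phi x y := by
    rw [Finset.mul_sum, ← Finset.sum_add_distrib]
    apply Finset.sum_congr rfl
    intros; ring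
  linear_combination hcomb

noncomputable def pPoly (ν : ℝ) (d : ℕ) : Polynomial ℝ :=
  ∑ i ∈ Finset.range (d + 1),
    Polynomial.C (c ν d i) * ∏ m ∈ Finset.range i, (Polynomial.X - Polynomial.C (m : ℝ))

lemma pPoly_eval (ν : ℝ) (d : ℕ) (y : ℝ) : (pPoly ν d).eval y = p ν d y := by
  simp [pPoly, p, phi, Polynomial.eval_finset_sum, Polynomial.eval_prod]

lemma natDegree_prod_lin (i : ℕ) :
    (∏ m ∈ Finset.range i, (Polynomial.X - Polynomial.C (m : ℝ))).natDegree = i := by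
  rw [Polynomial.natDegree_prod_of_monic _ _ (fun m _ => Polynomial.monic_X_sub_C _)]
  have h1 : ∀ m ∈ Finset.range i, (Polynomial.X - Polynomial.C ((m : ℝ))).natDegree = 1 :=
    fun m _ => Polynomial.natDegree_X_sub_C _
  rw [Finset.sum_congr rfl h1]
  simp

lemma pPoly_natDegree_le (ν : ℝ) (d : ℕ) : (pPoly ν d).natDegree ≤ d := by
  apply Polynomial.natDegree_sum_le_of_forall_le
  intro i hi
  rw [Finset.mem_range] at hi
  calc (Polynomial.C (c ν d i) * ∏ m ∈ Finset.range i,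
        (Polynomial.X - Polynomial.C (m : ℝ))).natDegree
      ≤ (∏ m ∈ Finset.range i, (Polynomial.X - Polynomial.C (m : ℝ))).natDegree :=
        Polynomial.natDegree_C_mul_le _ _
    _ = i := natDegree_prod_lin i
    _ ≤ d := Nat.lt_succ_iff.mp hi

lemma pPoly_coeff_d (ν : ℝ) (d : ℕ) : (pPoly ν d).coeff d = c ν d d := by
  rw [pPoly, Polynomial.finset_sum_coeff, Finset.sum_range_succ]
  have h1 : ∀ i ∈ Finset.range d,
      (Polynomial.C (c ν d i) * ∏ m ∈ Finset.range i,
        (Polynomial.X - Polynomial.C (m : ℝ))).coeff d = 0 := by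
    intro i hi
    rw [Finset.mem_range] at hi
    apply Polynomial.coeff_eq_zero_of_natDegree_lt
    calc (Polynomial.C (c ν d i) * _).natDegree ≤ _ := Polynomial.natDegree_C_mul_le _ _
      _ = i := natDegree_prod_lin i
      _ < d := hi
  rw [Finset.sum_eq_zero h1, zero_add]
  have hm : (∏ m ∈ Finset.range d, (Polynomial.X - Polynomial.C (m : ℝ))).Monic :=
    Polynomial.monic_prod_of_monic _ _ (fun m _ => Polynomial.monic_X_sub_C _)
  rw [Polynomial.coeff_C_mul]
  have : (∏ m ∈ Finset.range d, (Polynomial.X - Polynomial.C (m : ℝ))).coeff d = 1 := by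
    have := hm.coeff_natDegree
    rwa [natDegree_prod_lin d] at this
  rw [this, mul_one]

lemma pPoly_ne_zero (ν : ℝ) (d : ℕ) : pPoly ν d ≠ 0 := fun h => by
  have := pPoly_coeff_d ν d
  rw [h] at this
  exact c_d_ne_zero ν d (by simpa using this.symm)

lemma exists_p_ne_zero (ν : ℝ) (d n : ℕ) (h : d < n) :
    ∃ j : ℕ, j < n ∧ p ν d (j : ℝ) ≠ 0 := by
  by_contra hc
  push_neg at hc
  have hroots : ((Finset.range n).image (Nat.cast : ℕ → ℝ)) ⊆ (pPoly ν d).roots.toFinset := by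
    intro x hx
    rw [Finset.mem_image] at hx
    obtain ⟨j, hj, rfl⟩ := hx
    rw [Multiset.mem_toFinset, Polynomial.mem_roots']
    exact ⟨pPoly_ne_zero ν d, by rw [Polynomial.IsRoot, pPoly_eval]; exact hc j (Finset.mem_range.mp hj)⟩
  have h1 : n ≤ (pPoly ν d).roots.toFinset.card := by
    have := Finset.card_le_card hroots
    rwa [Finset.card_image_of_injective _ Nat.cast_injective, Finset.card_range] at this
  have h2 : (pPoly ν d).roots.toFinset.card ≤ d :=
    le_trans (Multiset.toFinset_card_le _)
      (le_trans (Polynomial.card_roots' _) (pPoly_natDegree_le ν d))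
  omega

section Eigen
variable (N : ℕ) (hN : 2 ≤ N)
    (E : Matrix (Fin (N - 1)) (Fin (N - 1)) ℝ)
    (hsym : E.IsSymm)
    (hdiag : ∀ i : Fin (N - 1),
      E i i = 2 * (i.val + 1 : ℝ) * ((N : ℝ) - (i.val + 1)))
    (hsup : ∀ i k : Fin (N - 1), k.val = i.val + 1 →
      E i k = -Real.sqrt ((i.val + 1 : ℝ) * ((N : ℝ) - (i.val + 1))
        * (i.val + 2 : ℝ) * ((N : ℝ) - (i.val + 2))))
    (hzero : ∀ i k : Fin (N - 1), i.val + 2 ≤ k.val → E i k = 0)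

/-- The weight in front of the polynomial. -/
noncomputable def w (N : ℕ) (m : ℕ) : ℝ :=
  Real.sqrt (((m : ℝ) + 1) * ((N : ℝ) - ((m : ℝ) + 1)))

include hsym hdiag hsup hzero hN in
theorem eigen_mem (d : ℕ) (hd : d < N - 1) :
    ∃ v : Fin (N - 1) → ℝ, v ≠ 0 ∧
      E *ᵥ v = (((d : ℝ) + 1) * ((d : ℝ) + 2)) • v := by
  have hnN : ((N - 1 : ℕ) : ℝ) = (N : ℝ) - 1 := by
    have : (N - 1) + 1 = N := by omega
    have := congrArg (Nat.cast : ℕ → ℝ) this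
    push_cast at this
    linarith
  set lam : ℝ := ((d : ℝ) + 1) * ((d : ℝ) + 2) with hlam
  refine ⟨fun j => w N j.val * p N d (j.val : ℝ), ?_, ?_⟩
  · -- nonzero
    obtain ⟨j0, hj0, hp0⟩ := exists_p_ne_zero (N : ℝ) d (N - 1) hd
    intro hv
    have := congrFun hv ⟨j0, hj0⟩
    simp only [Pi.zero_apply] at this
    have hw : w N j0 ≠ 0 := by
      unfold w
      have h1 : (0 : ℝ) < ((j0 : ℝ) + 1) * ((N : ℝ) - ((j0 : ℝ) + 1)) := by
        have : (j0 : ℝ) + 1 ≤ (N : ℝ) - 1 := by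
          have : j0 + 2 ≤ N := by omega
          have := congrArg (Nat.cast : ℕ → ℝ) (Nat.sub_add_cancel (by omega : 2 ≤ N))
          have hc : ((j0 : ℝ) + 2) ≤ (N : ℝ) := by exact_mod_cast ‹j0 + 2 ≤ N›
          linarith
        have h2 : (0 : ℝ) < (j0 : ℝ) + 1 := by positivity
        nlinarith
      exact ne_of_gt (Real.sqrt_pos.mpr h1)
    exact hp0 (by
      rcases mul_eq_zero.mp this with h | h
      · exact absurd h hw
      · exact h)
  · -- eigen equation
    funext i
    set a := i.val with ha
    have hai : a < N - 1 := i.isLt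
    have hcast : ∀ m : ℕ, m ≤ N → ((m : ℝ) ≤ (N : ℝ)) := fun m hm => by exact_mod_cast hm
    have hA0 : (0:ℝ) ≤ ((a:ℝ) + 1) * ((N:ℝ) - 1 - (a:ℝ)) := by
      have h2 : ((a:ℝ) + 2) ≤ (N : ℝ) := by exact_mod_cast (by omega : a + 2 ≤ N)
      have h1 : (0:ℝ) ≤ (a:ℝ) := Nat.cast_nonneg a
      nlinarith
    have hC0 : (0:ℝ) ≤ (a:ℝ) * ((N:ℝ) - (a:ℝ)) := by
      have h2 : ((a:ℝ)) ≤ (N : ℝ) := by exact_mod_cast (by omega : a ≤ N)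
      have h1 : (0:ℝ) ≤ (a:ℝ) := Nat.cast_nonneg a
      nlinarith
    set g : ℕ → ℝ := fun m =>
      if h : m < N - 1 then E i ⟨m, h⟩ * (w N m * p N d (m : ℝ)) else 0 with hg
    have hrow : (E *ᵥ fun j => w N j.val * p N d (j.val : ℝ)) i
        = ∑ m ∈ Finset.range (N - 1), g m := by
      rw [← Fin.sum_univ_eq_sum_range g (N - 1)]
      rw [Matrix.mulVec, dotProduct]
      apply Finset.sum_congr rfl
      intro j _
      rw [hg]
      simp only [Fin.is_lt, dif_pos, Fin.eta]
    have hgz : ∀ m, m < N - 1 → (m + 2 ≤ a ∨ a + 2 ≤ m) → g m = 0 := by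
      intro m hm hcase
      rw [hg]
      simp only [dif_pos hm]
      rcases hcase with h | h
      · have hEsym : E i ⟨m, hm⟩ = E ⟨m, hm⟩ i := by
          have := congrFun (congrFun hsym i) ⟨m, hm⟩
          simpa [Matrix.transpose_apply] using this.symm
        rw [hEsym, hzero ⟨m, hm⟩ i (by simpa using h), zero_mul]
      · rw [hzero i ⟨m, hm⟩ (by simpa using h), zero_mul]
    have hsum2 : ∑ m ∈ Finset.range (N - 1), g m
        = ∑ m ∈ Finset.Ico (a - 1) (min (a + 2) (N - 1)), g m := by
      symm
      apply Finset.sum_subset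
      · intro m hm
        rw [Finset.mem_Ico] at hm
        rw [Finset.mem_range]
        omega
      · intro m hm hnot
        rw [Finset.mem_range] at hm
        rw [Finset.mem_Ico] at hnot
        exact hgz m hm (by omega)
    -- diagonal term
    have t2 : g a = 2 * ((a:ℝ) + 1) * ((N:ℝ) - 1 - (a:ℝ))
        * (Real.sqrt (((a:ℝ) + 1) * ((N:ℝ) - 1 - (a:ℝ))) * p N d (a:ℝ)) := by
      rw [hg]
      simp only [dif_pos hai]
      have hIa : (⟨a, hai⟩ : Fin (N - 1)) = i := by
        apply Fin.ext
        simp [ha]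
      rw [hIa, hdiag i, ← ha]
      unfold w
      rw [show ((a:ℝ) + 1) * ((N:ℝ) - ((a:ℝ) + 1)) = ((a:ℝ) + 1) * ((N:ℝ) - 1 - (a:ℝ)) by ring]
      ring
    -- superdiagonal term
    have t3 : a + 1 < N - 1 → g (a + 1)
        = -((((a:ℝ) + 2) * ((N:ℝ) - 2 - (a:ℝ)))
            * Real.sqrt (((a:ℝ) + 1) * ((N:ℝ) - 1 - (a:ℝ)))) * p N d ((a:ℝ) + 1) := by
      intro h3
      have hB0 : (0:ℝ) ≤ ((a:ℝ) + 2) * ((N:ℝ) - 2 - (a:ℝ)) := by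
        have h2 : ((a:ℝ) + 3) ≤ (N : ℝ) := by exact_mod_cast (by omega : a + 3 ≤ N)
        have h1 : (0:ℝ) ≤ (a:ℝ) := Nat.cast_nonneg a
        nlinarith
      rw [hg]
      simp only [dif_pos h3]
      have hk : ((⟨a + 1, h3⟩ : Fin (N - 1)) : ℕ) = i.val + 1 := by simp [ha]
      rw [hsup i ⟨a + 1, h3⟩ hk, ← ha]
      rw [show ((a:ℝ) + 1) * ((N:ℝ) - ((a:ℝ) + 1)) * ((a:ℝ) + 2) * ((N:ℝ) - ((a:ℝ) + 2))
          = (((a:ℝ) + 1) * ((N:ℝ) - 1 - (a:ℝ))) * (((a:ℝ) + 2) * ((N:ℝ) - 2 - (a:ℝ))) by ring]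
      rw [Real.sqrt_mul hA0]
      unfold w
      push_cast
      rw [show ((a:ℝ) + 1 + 1) * ((N:ℝ) - ((a:ℝ) + 1 + 1)) = ((a:ℝ) + 2) * ((N:ℝ) - 2 - (a:ℝ)) by ring]
      have hss := Real.mul_self_sqrt hB0
      linear_combination (-(Real.sqrt (((a:ℝ) + 1) * ((N:ℝ) - 1 - (a:ℝ)))) * p N d ((a:ℝ) + 1)) * hss
    -- subdiagonal term
    have t1 : 1 ≤ a → g (a - 1)
        = -(((a:ℝ) * ((N:ℝ) - (a:ℝ)))
            * Real.sqrt (((a:ℝ) + 1) * ((N:ℝ) - 1 - (a:ℝ)))) * p N d ((a:ℝ) - 1) := by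
      intro h1
      have hm1 : a - 1 < N - 1 := by omega
      rw [hg]
      simp only [dif_pos hm1]
      have hEsym : E i ⟨a - 1, hm1⟩ = E ⟨a - 1, hm1⟩ i := by
        have := congrFun (congrFun hsym i) ⟨a - 1, hm1⟩
        simpa [Matrix.transpose_apply] using this.symm
      have hik : (i : ℕ) = ((⟨a - 1, hm1⟩ : Fin (N - 1)) : ℕ) + 1 := by simp [← ha]; omega
      rw [hEsym, hsup ⟨a - 1, hm1⟩ i hik]
      have hbcast : (((a - 1 : ℕ)) : ℝ) = (a:ℝ) - 1 := by
        have : ((a - 1 : ℕ) : ℝ) + 1 = ((a:ℝ)) := by exact_mod_cast congrArg (Nat.cast : ℕ → ℝ) (by omega : (a - 1) + 1 = a)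
        linarith
      unfold w
      simp only [hbcast]
      rw [show ((a:ℝ) - 1 + 1) * ((N:ℝ) - ((a:ℝ) - 1 + 1)) * ((a:ℝ) - 1 + 2) * ((N:ℝ) - ((a:ℝ) - 1 + 2))
          = ((a:ℝ) * ((N:ℝ) - (a:ℝ))) * (((a:ℝ) + 1) * ((N:ℝ) - 1 - (a:ℝ))) by ring]
      rw [Real.sqrt_mul hC0]
      rw [show ((a:ℝ) - 1 + 1) * ((N:ℝ) - ((a:ℝ) - 1 + 1)) = (a:ℝ) * ((N:ℝ) - (a:ℝ)) by ring]
      have hss := Real.mul_self_sqrt hC0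
      linear_combination (-(Real.sqrt (((a:ℝ) + 1) * ((N:ℝ) - 1 - (a:ℝ)))) * p N d ((a:ℝ) - 1)) * hss
    have key := p_eigen (N:ℝ) d ((a:ℝ))
    rw [hrow, hsum2]
    simp only [Pi.smul_apply, smul_eq_mul, ← ha]
    rcases Nat.lt_or_ge a 1 with ha0 | ha1
    · have ha0' : a = 0 := by omega
      have hy0 : ((a:ℝ)) = 0 := by rw [ha0']; norm_num
      rcases Nat.lt_or_ge (a + 1) (N - 1) with h3 | h4
      · -- bottom row, N - 1 ≥ 2
        rw [show min (a + 2) (N - 1) = a + 2 by omega, Finset.sum_Ico_eq_sum_range,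
          show a + 2 - (a - 1) = 2 by omega, Finset.sum_range_succ, Finset.sum_range_succ,
          Finset.sum_range_zero, show a - 1 + 0 = a by omega, show a - 1 + 1 = a + 1 by omega]
        rw [t2, t3 h3]
        unfold w
        rw [show ((a:ℝ) + 1) * ((N:ℝ) - ((a:ℝ) + 1)) = ((a:ℝ) + 1) * ((N:ℝ) - 1 - (a:ℝ)) by ring]
        linear_combination (-(Real.sqrt (((a:ℝ) + 1) * ((N:ℝ) - 1 - (a:ℝ))))) * key
          + (Real.sqrt (((a:ℝ) + 1) * ((N:ℝ) - 1 - (a:ℝ))) * ((N:ℝ) - (a:ℝ)) * p N d ((a:ℝ) - 1)) * hy0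
      · -- N = 2, single row
        have hBz : (N:ℝ) - 2 - (a:ℝ) = 0 := by
          have h := congrArg (Nat.cast : ℕ → ℝ) (by omega : a + 2 = N)
          push_cast at h
          linarith
        rw [show min (a + 2) (N - 1) = a + 1 by omega, Finset.sum_Ico_eq_sum_range,
          show a + 1 - (a - 1) = 1 by omega, Finset.sum_range_succ,
          Finset.sum_range_zero, show a - 1 + 0 = a by omega]
        rw [t2]
        unfold w
        rw [show ((a:ℝ) + 1) * ((N:ℝ) - ((a:ℝ) + 1)) = ((a:ℝ) + 1) * ((N:ℝ) - 1 - (a:ℝ)) by ring]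
        linear_combination (-(Real.sqrt (((a:ℝ) + 1) * ((N:ℝ) - 1 - (a:ℝ))))) * key
          + (Real.sqrt (((a:ℝ) + 1) * ((N:ℝ) - 1 - (a:ℝ))) * ((N:ℝ) - (a:ℝ)) * p N d ((a:ℝ) - 1)) * hy0
          + (Real.sqrt (((a:ℝ) + 1) * ((N:ℝ) - 1 - (a:ℝ))) * ((a:ℝ) + 2) * p N d ((a:ℝ) + 1)) * hBz
    · rcases Nat.lt_or_ge (a + 1) (N - 1) with h3 | h4
      · -- interior row
        rw [show min (a + 2) (N - 1) = a + 2 by omega, Finset.sum_Ico_eq_sum_range,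
          show a + 2 - (a - 1) = 3 by omega, Finset.sum_range_succ, Finset.sum_range_succ,
          Finset.sum_range_succ, Finset.sum_range_zero, show a - 1 + 0 = a - 1 by omega,
          show a - 1 + 1 = a by omega, show a - 1 + 2 = a + 1 by omega]
        rw [t1 ha1, t2, t3 h3]
        unfold w
        rw [show ((a:ℝ) + 1) * ((N:ℝ) - ((a:ℝ) + 1)) = ((a:ℝ) + 1) * ((N:ℝ) - 1 - (a:ℝ)) by ring]
        linear_combination (-(Real.sqrt (((a:ℝ) + 1) * ((N:ℝ) - 1 - (a:ℝ))))) * key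
      · -- top row
        have hBz : (N:ℝ) - 2 - (a:ℝ) = 0 := by
          have h := congrArg (Nat.cast : ℕ → ℝ) (by omega : a + 2 = N)
          push_cast at h
          linarith
        rw [show min (a + 2) (N - 1) = a + 1 by omega, Finset.sum_Ico_eq_sum_range,
          show a + 1 - (a - 1) = 2 by omega, Finset.sum_range_succ, Finset.sum_range_succ,
          Finset.sum_range_zero, show a - 1 + 0 = a - 1 by omega, show a - 1 + 1 = a by omega]
        rw [t1 ha1, t2]
        unfold w
        rw [show ((a:ℝ) + 1) * ((N:ℝ) - ((a:ℝ) + 1)) = ((a:ℝ) + 1) * ((N:ℝ) - 1 - (a:ℝ)) by ring]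
        linear_combination (-(Real.sqrt (((a:ℝ) + 1) * ((N:ℝ) - 1 - (a:ℝ))))) * key
          + (Real.sqrt (((a:ℝ) + 1) * ((N:ℝ) - 1 - (a:ℝ))) * ((a:ℝ) + 2) * p N d ((a:ℝ) + 1)) * hBz

end Eigen
end EMatrixAux


open EMatrixAux in
/-- The tridiagonal matrix `E_{N-1}` with entries
`E_{j,k} = √(j(N-j))√(k(N-k))(2δ_{j,k} - δ_{j+1,k} - δ_{j-1,k})`
has eigenvalues exactly `k(k+1)`, `k = 1,…,N-1`, and is positive definite. -/
theorem E_matrix_eigenvalues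
    (N : ℕ) (hN : 2 ≤ N)
    (E : Matrix (Fin (N - 1)) (Fin (N - 1)) ℝ)
    (hsym : E.IsSymm)
    (hdiag : ∀ i : Fin (N - 1),
      E i i = 2 * (i.val + 1 : ℝ) * ((N : ℝ) - (i.val + 1)))
    (hsup : ∀ i k : Fin (N - 1), k.val = i.val + 1 →
      E i k = -Real.sqrt ((i.val + 1 : ℝ) * ((N : ℝ) - (i.val + 1))
        * (i.val + 2 : ℝ) * ((N : ℝ) - (i.val + 2))))
    (hzero : ∀ i k : Fin (N - 1), i.val + 2 ≤ k.val → E i k = 0) :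
    spectrum ℝ E = {t : ℝ | ∃ k : ℕ, 1 ≤ k ∧ k ≤ N - 1 ∧ t = (k : ℝ) * (k + 1)}
    ∧ E.PosDef := by
  have hherm : E.IsHermitian := by
    ext i j
    rw [Matrix.conjTranspose_apply]
    have := congrFun (congrFun hsym i) j
    simpa [Matrix.transpose_apply] using this
  -- spectrum equals range of Hermitian eigenvalues
  have hrange : spectrum ℝ E = Set.range hherm.eigenvalues := by
    have h1 : (hherm.eigenvectorUnitary : Matrix (Fin (N - 1)) (Fin (N - 1)) ℝ)
        * star (hherm.eigenvectorUnitary : Matrix (Fin (N - 1)) (Fin (N - 1)) ℝ) = 1 :=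
      Matrix.mem_unitaryGroup_iff.mp hherm.eigenvectorUnitary.2
    have h2 : star (hherm.eigenvectorUnitary : Matrix (Fin (N - 1)) (Fin (N - 1)) ℝ)
        * (hherm.eigenvectorUnitary : Matrix (Fin (N - 1)) (Fin (N - 1)) ℝ) = 1 :=
      Matrix.mem_unitaryGroup_iff'.mp hherm.eigenvectorUnitary.2
    set u : (Matrix (Fin (N - 1)) (Fin (N - 1)) ℝ)ˣ :=
      ⟨(hherm.eigenvectorUnitary : Matrix (Fin (N - 1)) (Fin (N - 1)) ℝ),
       star (hherm.eigenvectorUnitary : Matrix (Fin (N - 1)) (Fin (N - 1)) ℝ), h1, h2⟩ with hu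
    have hE : E = (u : Matrix (Fin (N - 1)) (Fin (N - 1)) ℝ)
        * Matrix.diagonal (RCLike.ofReal ∘ hherm.eigenvalues)
        * ((u⁻¹ : (Matrix (Fin (N - 1)) (Fin (N - 1)) ℝ)ˣ) :
            Matrix (Fin (N - 1)) (Fin (N - 1)) ℝ) :=
      hherm.spectral_theorem
    rw [show spectrum ℝ E = spectrum ℝ ((u : Matrix (Fin (N - 1)) (Fin (N - 1)) ℝ)
        * Matrix.diagonal (RCLike.ofReal ∘ hherm.eigenvalues)
        * ((u⁻¹ : (Matrix (Fin (N - 1)) (Fin (N - 1)) ℝ)ˣ) :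
            Matrix (Fin (N - 1)) (Fin (N - 1)) ℝ)) from congrArg _ hE,
      spectrum.units_conjugate,
      (funext fun _ => rfl :
        (RCLike.ofReal ∘ hherm.eigenvalues : Fin (N - 1) → ℝ) = hherm.eigenvalues),
      spectrum_diagonal]
  -- explicit eigenvalues are in the spectrum
  have hmem : ∀ d : ℕ, d < N - 1 → (((d:ℝ) + 1) * ((d:ℝ) + 2)) ∈ spectrum ℝ E := by
    intro d hd
    obtain ⟨v, hv0, hEv⟩ := eigen_mem N hN E hsym hdiag hsup hzero d hd
    have hsp : spectrum ℝ (Matrix.toLin' E) = spectrum ℝ E := by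
      rw [← Matrix.toLin_eq_toLin']
      exact AlgEquiv.spectrum_eq (Matrix.toLinAlgEquiv (Pi.basisFun ℝ (Fin (N - 1)))) E
    rw [← hsp, ← Module.End.hasEigenvalue_iff_mem_spectrum]
    exact Module.End.hasEigenvalue_of_hasEigenvector
      ⟨Module.End.mem_eigenspace_iff.mpr (by rw [Matrix.toLin'_apply, hEv]), hv0⟩
  -- the spectrum is exactly the claimed set
  have hspec : spectrum ℝ E
      = {t : ℝ | ∃ k : ℕ, 1 ≤ k ∧ k ≤ N - 1 ∧ t = (k : ℝ) * (k + 1)} := by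
    set S : Finset ℝ :=
      (Finset.range (N - 1)).image (fun k : ℕ => ((k:ℝ) + 1) * ((k:ℝ) + 2)) with hS
    set T : Finset ℝ := Finset.image hherm.eigenvalues Finset.univ with hT
    have hST : S ⊆ T := by
      intro t ht
      rw [hS, Finset.mem_image] at ht
      obtain ⟨d, hd, rfl⟩ := ht
      have := hmem d (Finset.mem_range.mp hd)
      rw [hrange] at this
      obtain ⟨i, hi⟩ := this
      rw [hT, Finset.mem_image]
      exact ⟨i, Finset.mem_univ i, hi⟩
    have hcardS : S.card = N - 1 := by
      rw [hS, Finset.card_image_of_injOn, Finset.card_range]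
      intro k _ l _ h
      have h' : ((k:ℝ) + 1) * ((k:ℝ) + 2) = ((l:ℝ) + 1) * ((l:ℝ) + 2) := h
      have hk : (0:ℝ) ≤ (k:ℝ) := Nat.cast_nonneg k
      have hl : (0:ℝ) ≤ (l:ℝ) := Nat.cast_nonneg l
      have : (k:ℝ) = (l:ℝ) := by
        rcases lt_trichotomy (k:ℝ) (l:ℝ) with hlt | heq | hgt
        · nlinarith [h', mul_pos (show (0:ℝ) < (l:ℝ) - (k:ℝ) by linarith)
            (show (0:ℝ) < (k:ℝ) + (l:ℝ) + 3 by linarith)]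
        · exact heq
        · nlinarith [h', mul_pos (show (0:ℝ) < (k:ℝ) - (l:ℝ) by linarith)
            (show (0:ℝ) < (k:ℝ) + (l:ℝ) + 3 by linarith)]
      exact_mod_cast this
    have hcardT : T.card ≤ N - 1 := by
      calc T.card ≤ Finset.univ.card := Finset.card_image_le
        _ = N - 1 := by simp
    have hSTeq : S = T := Finset.eq_of_subset_of_card_le hST (by omega)
    have hspS : spectrum ℝ E = ↑S := by
      rw [hSTeq, hT, hrange]
      rw [Finset.coe_image, Finset.coe_univ, Set.image_univ]
    rw [hspS]
    ext t
    simp only [Finset.mem_coe, hS, Finset.mem_image, Finset.mem_range, Set.mem_setOf_eq]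
    constructor
    · rintro ⟨d, hd, rfl⟩
      exact ⟨d + 1, by omega, by omega, by push_cast; ring⟩
    · rintro ⟨k, hk1, hk2, rfl⟩
      refine ⟨k - 1, by omega, ?_⟩
      have : ((k - 1 : ℕ) : ℝ) = (k : ℝ) - 1 := by
        have : ((k - 1 : ℕ) : ℝ) + 1 = (k:ℝ) := by
          exact_mod_cast congrArg (Nat.cast : ℕ → ℝ) (by omega : (k - 1) + 1 = k)
        linarith
      rw [this]
      ring
  refine ⟨hspec, ?_⟩
  -- positive definiteness
  have hpos : ∀ i, 0 < hherm.eigenvalues i := by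
    intro i
    have hin : hherm.eigenvalues i ∈ spectrum ℝ E := hherm.eigenvalues_mem_spectrum_real i
    rw [hspec] at hin
    obtain ⟨k, hk1, _, hk3⟩ := hin
    rw [hk3]
    have hk : (0:ℝ) < (k:ℝ) := by exact_mod_cast hk1
    nlinarith
  refine Matrix.PosDef.of_dotProduct_mulVec_pos hherm (fun x hx => ?_)
  set U : Matrix (Fin (N - 1)) (Fin (N - 1)) ℝ :=
    (hherm.eigenvectorUnitary : Matrix (Fin (N - 1)) (Fin (N - 1)) ℝ) with hU
  have h1 : U * star U = 1 := Matrix.mem_unitaryGroup_iff.mp hherm.eigenvectorUnitary.2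
  have hz : star U *ᵥ x ≠ 0 := by
    intro h
    apply hx
    have hEq : U *ᵥ (star U *ᵥ x) = x := by
      rw [Matrix.mulVec_mulVec, h1, Matrix.one_mulVec]
    rw [h, Matrix.mulVec_zero] at hEq
    exact hEq.symm
  have hdd : (Matrix.diagonal (RCLike.ofReal ∘ hherm.eigenvalues) :
      Matrix (Fin (N - 1)) (Fin (N - 1)) ℝ).PosDef :=
    Matrix.PosDef.diagonal (fun i => hpos i)
  have hq := hdd.dotProduct_mulVec_pos hz
  have hEx : E *ᵥ x = U *ᵥ (Matrix.diagonal (RCLike.ofReal ∘ hherm.eigenvalues)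
      *ᵥ (star U *ᵥ x)) := by
    conv_lhs => rw [show E = U * Matrix.diagonal (RCLike.ofReal ∘ hherm.eigenvalues) * star U
      from hherm.spectral_theorem]
    rw [← Matrix.mulVec_mulVec, ← Matrix.mulVec_mulVec]
  rw [hEx, dotProduct_mulVec]
  have hstar : star x ᵥ* U = star (star U *ᵥ x) := by
    rw [Matrix.star_mulVec, Matrix.star_eq_conjTranspose, Matrix.conjTranspose_conjTranspose]
  rw [hstar]
  exact hq
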